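/- The intersection over k ≥ 2 of the closed spans ⋁_{n≥k} Im(W_n) is the zero subspace of H². -/

import Mathlib

open scoped InnerProductSpace
open Filter ContinuousLinearMap

noncomputable section

/-- The Hardy space `H²` identified with `ℓ²(ℕ)` via Maclaurin coefficients. -/
abbrev H2 := lp (fun _ : ℕ => ℂ) 2

/-- `W` is the weighted composition operator `W_n f(z) = (1+z+⋯+z^{n-1}) f(z^n)`,
expressed in Maclaurin coefficients: `(W_n f)^(nk+j) = f^(k)` for `0 ≤ j ≤ n-1`. -/
def IsWn (n : ℕ) (W : H2 →L[ℂ] H2) : Prop :=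
  ∀ (f : H2) (k j : ℕ), j < n → (W f) (n * k + j) = f k

/-- Evaluation at a coordinate as a continuous linear map. -/
def evCLM (j : ℕ) : H2 →L[ℂ] ℂ :=
  LinearMap.mkContinuous
    { toFun := fun f => f j
      map_add' := fun f g => by simp [lp.coeFn_add]
      map_smul' := fun c f => by simp [lp.coeFn_smul] }
    1 (fun f => by
      show ‖f j‖ ≤ 1 * ‖f‖
      simpa using lp.norm_apply_le_norm two_ne_zero f j)

@[simp] lemma evCLM_apply (j : ℕ) (f : H2) : evCLM j f = f j := rfl

/-- The intersection over `k ≥ 2` of the closed spans `⋁_{n ≥ k} Im W_n` is zero. -/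
theorem iInf_closed_span_ranges (W : ℕ → (H2 →L[ℂ] H2))
    (hW : ∀ n, 1 ≤ n → IsWn n (W n)) :
    (⨅ k : ℕ, ⨅ _ : 2 ≤ k,
        (⨆ n : ℕ, ⨆ _ : k ≤ n, LinearMap.range (W n : H2 →ₗ[ℂ] H2)).topologicalClosure) = ⊥ := by
  rw [eq_bot_iff]
  intro g hg
  simp only [Submodule.mem_iInf] at hg
  -- every coordinate of `g` equals `g 0`
  have hconst : ∀ j : ℕ, g j = g 0 := by
    intro j
    set k := max 2 (j + 1) with hk
    have hk2 : 2 ≤ k := le_max_left _ _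
    have hjk : j < k := lt_of_lt_of_le (Nat.lt_succ_self j) (le_max_right _ _)
    have hgk := hg k hk2
    -- the closed subspace `ker (evCLM j - evCLM 0)` contains the sup
    have hle : (⨆ n : ℕ, ⨆ _ : k ≤ n, LinearMap.range (W n : H2 →ₗ[ℂ] H2)).topologicalClosure ≤
        LinearMap.ker ((evCLM j - evCLM 0 : H2 →L[ℂ] ℂ) : H2 →ₗ[ℂ] ℂ) := by
      apply Submodule.topologicalClosure_minimal
      · apply iSup_le; intro n; apply iSup_le; intro hn
        rintro x ⟨f, rfl⟩
        have hn1 : 1 ≤ n := le_trans (by omega) hn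
        have h1 : (W n f) j = f 0 := by
          have := hW n hn1 f 0 j (lt_of_lt_of_le hjk hn)
          simpa using this
        have h2 : (W n f) 0 = f 0 := by
          have := hW n hn1 f 0 0 (by omega)
          simpa using this
        simp only [LinearMap.mem_ker, ContinuousLinearMap.coe_coe, ContinuousLinearMap.coe_sub',
          Pi.sub_apply, evCLM_apply, h1, h2, sub_self]
      · exact ContinuousLinearMap.isClosed_ker _
    have := hle hgk
    simpa [sub_eq_zero] using this
  -- a constant ℓ² sequence is zero
  have hsum : Summable (fun i : ℕ => ‖g i‖ ^ (2 : ℝ)) := by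
    have := lp.memℓp g
    exact this.summable (by norm_num)
  have hzero : g 0 = 0 := by
    by_contra h0
    have hconst' : (fun i : ℕ => ‖g i‖ ^ (2 : ℝ)) = fun _ => ‖g 0‖ ^ (2 : ℝ) := by
      funext i; rw [hconst i]
    rw [hconst'] at hsum
    have := hsum.tendsto_atTop_zero
    have heq : ‖g 0‖ ^ (2 : ℝ) = 0 := tendsto_nhds_unique tendsto_const_nhds this
    rw [Real.rpow_two, pow_eq_zero_iff (by norm_num : 2 ≠ 0)] at heq
    exact h0 (norm_eq_zero.mp heq)
  have : ∀ i, g i = 0 := fun i => by rw [hconst i, hzero]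
  exact Submodule.mem_bot ℂ |>.mpr (by ext i; exact this i)
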